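/- Let 3 < k < n. Every basis tensor of C^{⊗k} occurring with nonzero coefficient in any of the three elements Σ_{p=1}^{k}(1^{⊗(p−1)} ⊗ ∂ ⊗ 1^{⊗(k−p)})(Δ_k(P)), (Δ_{k−1} ⊗ 1)(Δ_2(P)) + (1 ⊗ Δ_{k−1})(Δ_2(P)), and Σ_{j=0}^{k−2}(1^{⊗j} ⊗ Δ_2 ⊗ 1^{⊗(k−2−j)})(Δ_{k−1}(P)) contains exactly one tensor factor which is a vertex v_m; moreover, whenever a factor e_i stands immediately to the left of that vertex factor v_m one has i < m, and whenever a factor e_j stands immediately to the right of v_m one has m ≤ j. (Here the tensor products of maps are evaluated with the Koszul sign convention.) -/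

import Mathlib

noncomputable section

/-- Cells of an `n`-gon: `v i` models the vertex `v_{i+1}`, `e i` models the edge `e_{i+1}`
(so indices are 0-based), and `F` models the 2-cell `P`. -/
inductive Cell (n : ℕ) : Type where
  | v : Fin n → Cell n
  | e : Fin n → Cell n
  | F : Cell n
deriving DecidableEq

/-- `Tens R n k` models `C^{⊗ k}`, the free `R`-module on `k`-tuples of cells. -/
abbrev Tens (R : Type) [CommRing R] (n k : ℕ) : Type := (Fin k → Cell n) →₀ R

/-- The basis tensor corresponding to a tuple of cells. -/
def bt (R : Type) [CommRing R] {n k : ℕ} (x : Fin k → Cell n) : Tens R n k :=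
  Finsupp.single x 1

/-- Degree of a cell. -/
def degC {n : ℕ} : Cell n → ℕ
  | .v _ => 0
  | .e _ => 1
  | .F => 2

/-- `(-1)^m` in `R`. -/
def sgn (R : Type) [CommRing R] (m : ℤ) : R := if Even m then 1 else -1

/-- The boundary operator on basis cells: `∂(v_i) = 0`, `∂(e_i) = v_{i+1} - v_i` for `i < n`,
`∂(e_n) = v_n - v_1`, `∂(P) = e_1 + ⋯ + e_{n-1} - e_n`. -/
def dB (R : Type) [CommRing R] (n : ℕ) : Cell n → Tens R n 1
  | .v _ => 0
  | .e i =>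
      if h : (i : ℕ) + 1 < n then
        bt R (fun _ => Cell.v ⟨(i : ℕ) + 1, h⟩) - bt R (fun _ => Cell.v i)
      else
        bt R (fun _ => Cell.v i) - bt R (fun _ => Cell.v ⟨0, i.pos⟩)
  | .F => ∑ i : Fin n, (if (i : ℕ) + 1 < n then (1 : R) else -1) • bt R (fun _ => Cell.e i)

/-- `Σ_{0<i_1<⋯<i_k<n} e_{i_1} ⊗ ⋯ ⊗ e_{i_k}` (with 0-based indices: strictly increasing
tuples of edge indices all `< n-1`). -/
def esum (R : Type) [CommRing R] (n k : ℕ) : Tens R n k :=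
  ∑ f : Fin k → Fin n,
    if (∀ p q : Fin k, p < q → f p < f q) ∧ (∀ p : Fin k, ((f p) : ℕ) + 1 < n) then
      bt R (fun p => Cell.e (f p))
    else 0

/-- The `A_∞`-coalgebra operations on basis cells: `DeltaB R n 2` is the Kravatz diagonal
`Δ₂` and for `k ≥ 3`, `DeltaB R n k` is `Δ_k`, which vanishes on vertices and edges and sends
`P` to `Σ_{0<i_1<⋯<i_k<n} e_{i_1} ⊗ ⋯ ⊗ e_{i_k}`. -/
def DeltaB (R : Type) [CommRing R] (n : ℕ) (k : ℕ) : Cell n → Tens R n k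
  | .v i => if k = 2 then bt R (fun _ => Cell.v i) else 0
  | .e i =>
      if k = 2 then
        if h : (i : ℕ) + 1 < n then
          bt R (fun p => if (p : ℕ) = 0 then Cell.v i else Cell.e i) +
            bt R (fun p => if (p : ℕ) = 0 then Cell.e i else Cell.v ⟨(i : ℕ) + 1, h⟩)
        else
          bt R (fun p => if (p : ℕ) = 0 then Cell.v ⟨0, i.pos⟩ else Cell.e i) +
            bt R (fun p => if (p : ℕ) = 0 then Cell.e i else Cell.v i)
      else 0
  | .F =>
      esum R n k +
        (if h : k = 2 ∧ 0 < n then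
          bt R (fun p => if (p : ℕ) = 0 then Cell.v ⟨0, h.2⟩ else Cell.F) +
            bt R (fun p => if (p : ℕ) = 0 then Cell.F
                  else Cell.v ⟨n - 1, Nat.sub_lt h.2 Nat.one_pos⟩)
        else 0)

/-- Extension of a map defined on basis tensors to a linear map. -/
def lext (R : Type) [CommRing R] (n : ℕ) {k m : ℕ} (φ : (Fin k → Cell n) → Tens R n m) :
    Tens R n k →ₗ[R] Tens R n m :=
  Finsupp.linearCombination R φ

/-- Splicing a `j`-tuple into a `k`-tuple at position `a`, producing an `m`-tuple
(meaningful when `m = k + j - 1` and `a < k`). -/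
def splice {n k j : ℕ} (m a : ℕ) (x : Fin k → Cell n) (y : Fin j → Cell n) :
    Fin m → Cell n := fun q =>
  if h1 : (q : ℕ) < a ∧ (q : ℕ) < k then x ⟨q, h1.2⟩
  else if h2 : a ≤ (q : ℕ) ∧ (q : ℕ) - a < j then y ⟨(q : ℕ) - a, h2.2⟩
  else if h3 : (q : ℕ) + 1 - j < k then x ⟨(q : ℕ) + 1 - j, h3⟩
  else Cell.F

/-- `opp R n k m j a p g` is the linear map `1^{⊗a} ⊗ g ⊗ 1^{⊗(k-1-a)} : C^{⊗k} → C^{⊗m}`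
(meaningful when `m = k + j - 1`), where `g` is the basis-level description of an operation
`C → C^{⊗j}` of degree `p`, evaluated with the Koszul sign convention. -/
def opp (R : Type) [CommRing R] (n : ℕ) (k m j a : ℕ) (p : ℤ) (g : Cell n → Tens R n j) :
    Tens R n k →ₗ[R] Tens R n m :=
  lext R n fun x =>
    if ha : a < k then
      sgn R (p * ∑ q : Fin k, if (q : ℕ) < a then (degC (x q) : ℤ) else 0) •
        Finsupp.mapDomain (splice m a x) (g (x ⟨a, ha⟩))
    else 0

/-- `Δ_k` as a linear map `C → C^{⊗k}`. -/
def Dmap (R : Type) [CommRing R] (n k : ℕ) : Tens R n 1 →ₗ[R] Tens R n k :=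
  lext R n fun x => DeltaB R n k (x 0)

/-- The boundary `∂` as a linear map `C → C`. -/
def bdry (R : Type) [CommRing R] (n : ℕ) : Tens R n 1 →ₗ[R] Tens R n 1 :=
  lext R n fun x => dB R n (x 0)

/-- The top cell `P` as a chain. -/
def cellP (R : Type) [CommRing R] (n : ℕ) : Tens R n 1 := bt R (fun _ => Cell.F)

end

section helpers
variable {R : Type} [CommRing R] {n : ℕ}

lemma bt_apply {k : ℕ} (a x : Fin k → Cell n) : bt R a x = if a = x then (1:R) else 0 := by
  simp [bt, Finsupp.single_apply]

lemma ex_of_sum_ne {ι : Type*} {k : ℕ} (s : Finset ι) (v : ι → Tens R n k)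
    (x : Fin k → Cell n) (h : (∑ i ∈ s, v i) x ≠ 0) : ∃ i ∈ s, v i x ≠ 0 := by
  by_contra hc
  push_neg at hc
  exact h (by rw [Finsupp.finset_sum_apply]; exact Finset.sum_eq_zero hc)

lemma ex_of_lext_ne {k m : ℕ} (φ : (Fin k → Cell n) → Tens R n m) (f : Tens R n k)
    (x : Fin m → Cell n) (h : lext R n φ f x ≠ 0) : ∃ a, f a ≠ 0 ∧ φ a x ≠ 0 := by
  rw [lext, Finsupp.linearCombination_apply, Finsupp.sum, Finsupp.finset_sum_apply] at h
  obtain ⟨a, ha, hne⟩ := Finset.exists_ne_zero_of_sum_ne_zero h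
  rw [Finsupp.smul_apply, smul_eq_mul] at hne
  exact ⟨a, left_ne_zero_of_mul hne, right_ne_zero_of_mul hne⟩

lemma ex_of_mapDomain_ne {k m : ℕ} (h : (Fin k → Cell n) → (Fin m → Cell n))
    (v : Tens R n k) (x : Fin m → Cell n) (hx : Finsupp.mapDomain h v x ≠ 0) :
    ∃ a, v a ≠ 0 ∧ h a = x := by
  rw [Finsupp.mapDomain, Finsupp.sum, Finsupp.finset_sum_apply] at hx
  obtain ⟨a, ha, hne⟩ := Finset.exists_ne_zero_of_sum_ne_zero hx
  rw [Finsupp.single_apply] at hne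
  refine ⟨a, Finsupp.mem_support_iff.mp ha, ?_⟩
  by_contra hc; simp [hc] at hne

lemma ex_of_opp_ne {k m j a : ℕ} {p : ℤ} (g : Cell n → Tens R n j) (f : Tens R n k)
    (x : Fin m → Cell n) (h : opp R n k m j a p g f x ≠ 0) :
    ∃ x0, f x0 ≠ 0 ∧ ∃ (ha : a < k) (y : Fin j → Cell n),
      g (x0 ⟨a, ha⟩) y ≠ 0 ∧ splice m a x0 y = x := by
  obtain ⟨x0, hx0, hφ⟩ := ex_of_lext_ne _ f x h
  refine ⟨x0, hx0, ?_⟩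
  by_cases ha : a < k
  · refine ⟨ha, ?_⟩
    rw [dif_pos ha, Finsupp.smul_apply, smul_eq_mul] at hφ
    obtain ⟨y, hy, hsp⟩ := ex_of_mapDomain_ne _ _ x (right_ne_zero_of_mul hφ)
    exact ⟨y, hy, hsp⟩
  · rw [dif_neg ha] at hφ; simp at hφ

lemma ex_of_esum_ne {k : ℕ} (x : Fin k → Cell n) (h : esum R n k x ≠ 0) :
    ∃ f : Fin k → Fin n, (∀ p q : Fin k, p < q → f p < f q) ∧
      (∀ p : Fin k, ((f p) : ℕ) + 1 < n) ∧ x = fun p => Cell.e (f p) := by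
  rw [esum] at h
  obtain ⟨f, _, hne⟩ := ex_of_sum_ne _ _ x h
  split_ifs at hne with hc
  · rw [bt_apply] at hne
    split_ifs at hne with he
    · exact ⟨f, hc.1, hc.2, he.symm⟩
    · simp at hne
  · simp at hne

lemma ex_of_dB_e_ne {i : Fin n} (hi : (i : ℕ) + 1 < n) (y : Fin 1 → Cell n)
    (h : dB R n (Cell.e i) y ≠ 0) :
    ∃ m : Fin n, y = (fun _ => Cell.v m) ∧ ((m : ℕ) = i ∨ (m : ℕ) = (i : ℕ) + 1) := by
  rw [dB, dif_pos hi, Finsupp.sub_apply, bt_apply, bt_apply] at h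
  split_ifs at h with h1 h2 h2
  · exact ⟨⟨(i:ℕ)+1, hi⟩, h1.symm, Or.inr rfl⟩
  · exact ⟨⟨(i:ℕ)+1, hi⟩, h1.symm, Or.inr rfl⟩
  · exact ⟨i, h2.symm, Or.inl rfl⟩
  · simp at h

lemma DeltaB_v_eq_zero {k : ℕ} (hk : k ≠ 2) (i : Fin n) : DeltaB R n k (Cell.v i) = 0 := by
  simp [DeltaB, hk]

lemma DeltaB_e_eq_zero {k : ℕ} (hk : k ≠ 2) (i : Fin n) : DeltaB R n k (Cell.e i) = 0 := by
  simp [DeltaB, hk]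

lemma ex_of_DkF_ne {k : ℕ} (hk : k ≠ 2) (x : Fin k → Cell n)
    (h : DeltaB R n k Cell.F x ≠ 0) : esum R n k x ≠ 0 := by
  rw [DeltaB] at h
  rw [dif_neg (by simp [hk])] at h
  simpa using h

lemma ex_of_D2e_ne {i : Fin n} (hi : (i : ℕ) + 1 < n) (y : Fin 2 → Cell n)
    (h : DeltaB R n 2 (Cell.e i) y ≠ 0) :
    y = (fun p : Fin 2 => if (p : ℕ) = 0 then Cell.v i else Cell.e i) ∨
    y = (fun p : Fin 2 => if (p : ℕ) = 0 then Cell.e i else Cell.v ⟨(i:ℕ)+1, hi⟩) := by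
  rw [DeltaB, if_pos rfl, dif_pos hi, Finsupp.add_apply, bt_apply, bt_apply] at h
  split_ifs at h with h1 h2 h2
  · exact Or.inl h1.symm
  · exact Or.inl h1.symm
  · exact Or.inr h2.symm
  · simp at h

lemma splice_lt {k j m a : ℕ} (x : Fin k → Cell n) (y : Fin j → Cell n) (q : Fin m)
    (h1 : (q : ℕ) < a) (h2 : (q : ℕ) < k) : splice m a x y q = x ⟨q, h2⟩ := by
  rw [splice, dif_pos ⟨h1, h2⟩]

lemma splice_mid {k j m a : ℕ} (x : Fin k → Cell n) (y : Fin j → Cell n) (q : Fin m)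
    (h1 : a ≤ (q : ℕ)) (h2 : (q : ℕ) - a < j) :
    splice m a x y q = y ⟨(q : ℕ) - a, h2⟩ := by
  rw [splice, dif_neg (by omega), dif_pos ⟨h1, h2⟩]

lemma splice_hi {k j m a : ℕ} (x : Fin k → Cell n) (y : Fin j → Cell n) (q : Fin m)
    (h1 : a + j ≤ (q : ℕ)) (hj : 0 < j) (h3 : (q : ℕ) + 1 - j < k) :
    splice m a x y q = x ⟨(q : ℕ) + 1 - j, h3⟩ := by
  rw [splice, dif_neg (by omega), dif_neg (by omega), dif_pos h3]

lemma goalOf {k : ℕ} {x : Fin k → Cell n} (p0 : Fin k) (m : Fin n)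
    (hv : x p0 = Cell.v m)
    (he : ∀ q : Fin k, q ≠ p0 → ∃ i, x q = Cell.e i)
    (hL : ∀ (q : Fin k) (i : Fin n), (q : ℕ) + 1 = (p0 : ℕ) → x q = Cell.e i → i < m)
    (hR : ∀ (q : Fin k) (j : Fin n), (q : ℕ) = (p0 : ℕ) + 1 → x q = Cell.e j → m ≤ j) :
    ((∃! p : Fin k, ∃ m : Fin n, x p = Cell.v m) ∧
      (∀ (p : Fin k) (hp : (p : ℕ) + 1 < k) (i m : Fin n),
        x p = Cell.e i → x ⟨(p : ℕ) + 1, hp⟩ = Cell.v m → i < m) ∧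
      (∀ (p : Fin k) (hp : (p : ℕ) + 1 < k) (m j : Fin n),
        x p = Cell.v m → x ⟨(p : ℕ) + 1, hp⟩ = Cell.e j → m ≤ j)) := by
  have hvert : ∀ p : Fin k, (∃ m' : Fin n, x p = Cell.v m') → p = p0 := by
    intro p ⟨m', hm'⟩
    by_contra hp
    obtain ⟨i, hi⟩ := he p hp
    rw [hm'] at hi; cases hi
  refine ⟨⟨p0, ⟨m, hv⟩, fun p hp => hvert p hp⟩, ?_, ?_⟩
  · intro p hp i m' hei hvm
    have h1 : (⟨(p : ℕ) + 1, hp⟩ : Fin k) = p0 := hvert _ ⟨m', hvm⟩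
    have h2 : m' = m := by
      have h3 : Cell.v m = Cell.v m' := by rw [← hv, ← hvm, h1]
      cases h3; rfl
    subst h2
    exact hL p i (by rw [← h1]) hei
  · intro p hp m' j hvm hej
    have h1 : p = p0 := hvert _ ⟨m', hvm⟩
    subst h1
    have h2 : m' = m := by
      have h3 : Cell.v m = Cell.v m' := by rw [← hv, ← hvm]
      cases h3; rfl
    subst h2
    exact hR ⟨(p : ℕ) + 1, hp⟩ j rfl hej

lemma ex_of_D2F_ne (hn : 0 < n) (x0 : Fin 2 → Cell n) (h : DeltaB R n 2 Cell.F x0 ≠ 0) :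
    esum R n 2 x0 ≠ 0 ∨
    x0 = (fun p : Fin 2 => if (p : ℕ) = 0 then Cell.v ⟨0, hn⟩ else Cell.F) ∨
    x0 = (fun p : Fin 2 => if (p : ℕ) = 0 then Cell.F
            else Cell.v ⟨n - 1, Nat.sub_lt hn Nat.one_pos⟩) := by
  by_contra hc
  push_neg at hc
  obtain ⟨h1, h2, h3⟩ := hc
  rw [DeltaB, dif_pos ⟨rfl, hn⟩, Finsupp.add_apply, Finsupp.add_apply, h1,
    bt_apply, bt_apply, if_neg (fun hh => h2 hh.symm), if_neg (fun hh => h3 hh.symm)] at h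
  simp at h

end helpers

/-- For `3 < k < n`, every basis tensor occurring with nonzero coefficient in
`Σ_p (1^{⊗(p-1)}⊗∂⊗1^{⊗(k-p)})(Δ_k(P))`, in `(Δ_{k-1}⊗1)(Δ₂(P)) + (1⊗Δ_{k-1})(Δ₂(P))`, or in
`Σ_j (1^{⊗j}⊗Δ₂⊗1^{⊗(k-2-j)})(Δ_{k-1}(P))` contains exactly one vertex factor `v_m`; moreover
an edge `e_i` immediately to the left of the vertex satisfies `i < m` and an edge `e_j`
immediately to the right satisfies `m ≤ j` (1-based indexing; here everything is 0-based,
which shifts both indices by one and preserves the inequalities). -/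
theorem one_vertex_factor (R : Type) [CommRing R] (n k : ℕ) (hn : 3 ≤ n)
    (hk3 : 3 < k) (hkn : k < n) :
    ∀ E ∈ ({∑ p ∈ Finset.range k, (opp R n k k 1 p (-1) (dB R n)) (DeltaB R n k Cell.F),
            (opp R n 2 k (k - 1) 0 ((k : ℤ) - 3) (DeltaB R n (k - 1))) (DeltaB R n 2 Cell.F) +
              (opp R n 2 k (k - 1) 1 ((k : ℤ) - 3) (DeltaB R n (k - 1)))
                (DeltaB R n 2 Cell.F),
            ∑ j ∈ Finset.range (k - 1),
              (opp R n (k - 1) k 2 j 0 (DeltaB R n 2)) (DeltaB R n (k - 1) Cell.F)} :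
          Set (Tens R n k)),
      ∀ x : Fin k → Cell n, E x ≠ 0 →
        ((∃! p : Fin k, ∃ m : Fin n, x p = Cell.v m) ∧
          (∀ (p : Fin k) (hp : (p : ℕ) + 1 < k) (i m : Fin n),
            x p = Cell.e i → x ⟨(p : ℕ) + 1, hp⟩ = Cell.v m → i < m) ∧
          (∀ (p : Fin k) (hp : (p : ℕ) + 1 < k) (m j : Fin n),
            x p = Cell.v m → x ⟨(p : ℕ) + 1, hp⟩ = Cell.e j → m ≤ j)) := by
  have hk2 : k - 1 ≠ 2 := by omega
  intro E hE x hx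
  simp only [Set.mem_insert_iff, Set.mem_singleton_iff] at hE
  rcases hE with hE | hE | hE <;> subst hE
  · -- Case 1: boundary applied to Δ_k(P)
    obtain ⟨p, hpmem, hne⟩ := ex_of_sum_ne _ _ x hx
    obtain ⟨x0, hx0, hpk, y, hy, hsp⟩ := ex_of_opp_ne _ _ x hne
    obtain ⟨f, hfmono, hfbd, hx0eq⟩ :=
      ex_of_esum_ne x0 (ex_of_DkF_ne (by omega) x0 hx0)
    subst hx0eq
    obtain ⟨m, hyeq, hm⟩ := ex_of_dB_e_ne (hfbd ⟨p, hpk⟩) y hy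
    subst hyeq
    subst hsp
    have hfm : ∀ (q1 q2 : ℕ) (h1 : q1 < k) (h2 : q2 < k), q1 < q2 →
        (f ⟨q1, h1⟩ : ℕ) < (f ⟨q2, h2⟩ : ℕ) := by
      intro q1 q2 h1 h2 hlt
      exact hfmono ⟨q1, h1⟩ ⟨q2, h2⟩ (Fin.mk_lt_mk.mpr hlt)
    refine goalOf ⟨p, hpk⟩ m ?_ ?_ ?_ ?_
    · rw [splice_mid _ _ _ (le_refl p) (by simp)]
    · intro q hq
      have hq' : (q : ℕ) ≠ p := fun h => hq (Fin.ext h)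
      rcases lt_or_gt_of_ne hq' with h | h
      · exact ⟨_, splice_lt _ _ q h (by omega)⟩
      · exact ⟨_, splice_hi _ _ q (by omega) one_pos (by omega)⟩
    · intro q i hq1 hqe
      simp only [] at hq1
      rw [splice_lt _ _ q (by omega) (by omega)] at hqe
      injection hqe with hfi
      have h1 := hfm q p q.isLt hpk (by omega)
      rw [← hfi, Fin.lt_def]
      rcases hm with hm | hm <;> omega
    · intro q j hq1 hqe
      simp only [] at hq1
      rw [splice_hi _ _ q (by omega) one_pos (by omega)] at hqe
      injection hqe with hfj
      have h1 := hfm p ((q:ℕ)+1-1) hpk (by omega) (by omega)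
      rw [← hfj, Fin.le_def]
      rcases hm with hm | hm <;> omega
  · -- Case 2: (Δ_{k-1} ⊗ 1) and (1 ⊗ Δ_{k-1}) applied to Δ₂(P)
    have hn0 : 0 < n := by omega
    have hor : opp R n 2 k (k - 1) 0 ((k : ℤ) - 3) (DeltaB R n (k - 1))
          (DeltaB R n 2 Cell.F) x ≠ 0 ∨
        opp R n 2 k (k - 1) 1 ((k : ℤ) - 3) (DeltaB R n (k - 1))
          (DeltaB R n 2 Cell.F) x ≠ 0 := by
      by_contra hc
      push_neg at hc
      rw [Finsupp.add_apply, hc.1, hc.2, add_zero] at hx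
      exact hx rfl
    rcases hor with hA | hA
    · -- a = 0 : (Δ_{k-1} ⊗ 1)
      obtain ⟨x0, hx0, ha2, y, hy, hsp⟩ := ex_of_opp_ne _ _ x hA
      have hF : x0 ⟨0, ha2⟩ = Cell.F := by
        cases hc : x0 ⟨0, ha2⟩ with
        | v i => rw [hc, DeltaB_v_eq_zero hk2] at hy; simp at hy
        | e i => rw [hc, DeltaB_e_eq_zero hk2] at hy; simp at hy
        | F => rfl
      rw [hF] at hy
      obtain ⟨g, hgmono, hgbd, hyeq⟩ := ex_of_esum_ne y (ex_of_DkF_ne hk2 y hy)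
      subst hyeq
      rcases ex_of_D2F_ne hn0 x0 hx0 with hes | h01 | h01
      · obtain ⟨f, _, _, hx0eq⟩ := ex_of_esum_ne x0 hes
        rw [hx0eq] at hF; simp at hF
      · rw [h01] at hF; simp at hF
      · subst hsp
        have hhi : ∀ q : Fin k, (q : ℕ) = k - 1 →
            splice k 0 x0 (fun p => Cell.e (g p)) q
              = Cell.v ⟨n - 1, Nat.sub_lt hn0 Nat.one_pos⟩ := by
          intro q hq
          rw [splice_hi _ _ q (by omega) (by omega) (by omega), h01]
          exact if_neg (show ¬((q:ℕ) + 1 - (k-1) = 0) by omega)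
        have hmid : ∀ (q : Fin k) (h : (q : ℕ) < k - 1),
            splice k 0 x0 (fun p => Cell.e (g p)) q = Cell.e (g ⟨(q : ℕ), h⟩) := by
          intro q h
          rw [splice_mid _ _ q (Nat.zero_le _) (by omega)]
          rfl
        refine goalOf ⟨k - 1, by omega⟩ ⟨n - 1, Nat.sub_lt hn0 Nat.one_pos⟩
          (hhi _ rfl) ?_ ?_ ?_
        · intro q hq
          have hq' : (q : ℕ) ≠ k - 1 := fun hh => hq (Fin.ext hh)
          exact ⟨_, hmid q (by omega)⟩
        · intro q i hq1 hqe
          have hq1' : (q : ℕ) + 1 = k - 1 := hq1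
          have hq2 : (q : ℕ) < k - 1 := by omega
          rw [hmid q hq2] at hqe
          injection hqe with hfi
          have hb := hgbd ⟨(q : ℕ), hq2⟩
          rw [← hfi]
          exact Fin.lt_def.mpr (show ((g ⟨(q:ℕ), hq2⟩ : Fin n) : ℕ) < n - 1 by omega)
        · intro q j hq1 hqe
          have hq1' : (q : ℕ) = k - 1 + 1 := hq1
          have := q.isLt; omega
    · -- a = 1 : (1 ⊗ Δ_{k-1})
      obtain ⟨x0, hx0, ha2, y, hy, hsp⟩ := ex_of_opp_ne _ _ x hA
      have hF : x0 ⟨1, ha2⟩ = Cell.F := by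
        cases hc : x0 ⟨1, ha2⟩ with
        | v i => rw [hc, DeltaB_v_eq_zero hk2] at hy; simp at hy
        | e i => rw [hc, DeltaB_e_eq_zero hk2] at hy; simp at hy
        | F => rfl
      rw [hF] at hy
      obtain ⟨g, hgmono, hgbd, hyeq⟩ := ex_of_esum_ne y (ex_of_DkF_ne hk2 y hy)
      subst hyeq
      rcases ex_of_D2F_ne hn0 x0 hx0 with hes | h01 | h01
      · obtain ⟨f, _, _, hx0eq⟩ := ex_of_esum_ne x0 hes
        rw [hx0eq] at hF; simp at hF
      · subst hsp
        have hlo : ∀ q : Fin k, (q : ℕ) = 0 →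
            splice k 1 x0 (fun p => Cell.e (g p)) q = Cell.v ⟨0, hn0⟩ := by
          intro q hq
          rw [splice_lt _ _ q (by omega) (by omega), h01]
          exact if_pos (show (q:ℕ) = 0 by omega)
        have hmid : ∀ (q : Fin k) (h : (q : ℕ) - 1 < k - 1), 0 < (q : ℕ) →
            splice k 1 x0 (fun p => Cell.e (g p)) q
              = Cell.e (g ⟨(q : ℕ) - 1, h⟩) := by
          intro q h h0
          rw [splice_mid _ _ q (by omega) (by omega)]
        refine goalOf ⟨0, by omega⟩ ⟨0, hn0⟩ (hlo _ rfl) ?_ ?_ ?_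
        · intro q hq
          have hq' : (q : ℕ) ≠ 0 := fun hh => hq (Fin.ext hh)
          exact ⟨_, hmid q (by omega) (by omega)⟩
        · intro q i hq1 hqe
          have hq1' : (q : ℕ) + 1 = 0 := hq1
          omega
        · intro q j hq1 hqe
          exact Fin.le_def.mpr (Nat.zero_le _)
      · rw [h01] at hF; simp at hF
  · -- Case 3: Δ₂ plugged into Δ_{k-1}(P)
    obtain ⟨a, hamem, hne⟩ := ex_of_sum_ne _ _ x hx
    obtain ⟨x0, hx0, ha1, y, hy, hsp⟩ := ex_of_opp_ne _ _ x hne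
    obtain ⟨f, hfmono, hfbd, hx0eq⟩ := ex_of_esum_ne x0 (ex_of_DkF_ne hk2 x0 hx0)
    subst hx0eq
    subst hsp
    have hfm : ∀ (q1 q2 : ℕ) (h1 : q1 < k - 1) (h2 : q2 < k - 1), q1 < q2 →
        (f ⟨q1, h1⟩ : ℕ) < (f ⟨q2, h2⟩ : ℕ) := fun q1 q2 h1 h2 hlt =>
      hfmono ⟨q1, h1⟩ ⟨q2, h2⟩ (Fin.mk_lt_mk.mpr hlt)
    have hy' : DeltaB R n 2 (Cell.e (f ⟨a, ha1⟩)) y ≠ 0 := hy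
    have hlt' : ∀ (q : Fin k) (h : (q : ℕ) < k - 1), (q : ℕ) < a →
        splice k a (fun p => Cell.e (f p)) y q = Cell.e (f ⟨(q : ℕ), h⟩) := by
      intro q h hqa
      rw [splice_lt _ _ q hqa (by omega)]
    have hhi' : ∀ (q : Fin k) (h : (q : ℕ) - 1 < k - 1), a + 2 ≤ (q : ℕ) →
        splice k a (fun p => Cell.e (f p)) y q = Cell.e (f ⟨(q : ℕ) - 1, h⟩) := by
      intro q h hqa
      rw [splice_hi _ _ q (by omega) (by omega) (by omega)]
      rfl
    rcases ex_of_D2e_ne (hfbd ⟨a, ha1⟩) y hy' with hyeq | hyeq <;> subst hyeq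
    · -- y = v_i ⊗ e_i
      have hA0 : ∀ q : Fin k, (q : ℕ) = a →
          splice k a (fun p => Cell.e (f p))
            (fun p : Fin 2 => if (p : ℕ) = 0 then Cell.v (f ⟨a, ha1⟩)
              else Cell.e (f ⟨a, ha1⟩)) q = Cell.v (f ⟨a, ha1⟩) := by
        intro q hq
        rw [splice_mid _ _ q (by omega) (by omega)]
        exact if_pos (show (q : ℕ) - a = 0 by omega)
      have hA1 : ∀ q : Fin k, (q : ℕ) = a + 1 →
          splice k a (fun p => Cell.e (f p))
            (fun p : Fin 2 => if (p : ℕ) = 0 then Cell.v (f ⟨a, ha1⟩)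
              else Cell.e (f ⟨a, ha1⟩)) q = Cell.e (f ⟨a, ha1⟩) := by
        intro q hq
        rw [splice_mid _ _ q (by omega) (by omega)]
        exact if_neg (show ¬((q : ℕ) - a = 0) by omega)
      refine goalOf ⟨a, by omega⟩ (f ⟨a, ha1⟩) (hA0 _ rfl) ?_ ?_ ?_
      · intro q hq
        have hq' : (q : ℕ) ≠ a := fun hh => hq (Fin.ext hh)
        by_cases hc : (q : ℕ) = a + 1
        · exact ⟨_, hA1 q hc⟩
        · rcases Nat.lt_or_ge (q : ℕ) a with h | h
          · exact ⟨_, hlt' q (by omega) h⟩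
          · exact ⟨_, hhi' q (by omega) (by omega)⟩
      · intro q i hq1 hqe
        have hq1' : (q : ℕ) + 1 = a := hq1
        have hq2 : (q : ℕ) < k - 1 := by omega
        rw [hlt' q hq2 (by omega)] at hqe
        injection hqe with hfi
        have hb := hfm (q : ℕ) a hq2 ha1 (by omega)
        rw [← hfi]
        exact Fin.lt_def.mpr hb
      · intro q j hq1 hqe
        have hq1' : (q : ℕ) = a + 1 := hq1
        rw [hA1 q hq1'] at hqe
        injection hqe with hfj
        exact hfj ▸ le_refl _
    · -- y = e_i ⊗ v_{i+1}
      have hB0 : ∀ q : Fin k, (q : ℕ) = a →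
          splice k a (fun p => Cell.e (f p))
            (fun p : Fin 2 => if (p : ℕ) = 0 then Cell.e (f ⟨a, ha1⟩)
              else Cell.v ⟨(f ⟨a, ha1⟩ : ℕ) + 1, hfbd ⟨a, ha1⟩⟩) q
            = Cell.e (f ⟨a, ha1⟩) := by
        intro q hq
        rw [splice_mid _ _ q (by omega) (by omega)]
        exact if_pos (show (q : ℕ) - a = 0 by omega)
      have hB1 : ∀ q : Fin k, (q : ℕ) = a + 1 →
          splice k a (fun p => Cell.e (f p))
            (fun p : Fin 2 => if (p : ℕ) = 0 then Cell.e (f ⟨a, ha1⟩)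
              else Cell.v ⟨(f ⟨a, ha1⟩ : ℕ) + 1, hfbd ⟨a, ha1⟩⟩) q
            = Cell.v ⟨(f ⟨a, ha1⟩ : ℕ) + 1, hfbd ⟨a, ha1⟩⟩ := by
        intro q hq
        rw [splice_mid _ _ q (by omega) (by omega)]
        exact if_neg (show ¬((q : ℕ) - a = 0) by omega)
      refine goalOf ⟨a + 1, by omega⟩ ⟨(f ⟨a, ha1⟩ : ℕ) + 1, hfbd ⟨a, ha1⟩⟩
        (hB1 _ rfl) ?_ ?_ ?_
      · intro q hq
        have hq' : (q : ℕ) ≠ a + 1 := fun hh => hq (Fin.ext hh)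
        by_cases hc : (q : ℕ) = a
        · exact ⟨_, hB0 q hc⟩
        · rcases Nat.lt_or_ge (q : ℕ) a with h | h
          · exact ⟨_, hlt' q (by omega) h⟩
          · exact ⟨_, hhi' q (by omega) (by omega)⟩
      · intro q i hq1 hqe
        have hq1' : (q : ℕ) + 1 = a + 1 := hq1
        rw [hB0 q (by omega)] at hqe
        injection hqe with hfi
        rw [← hfi]
        exact Fin.lt_def.mpr (Nat.lt_succ_self _)
      · intro q j hq1 hqe
        have hq1' : (q : ℕ) = a + 1 + 1 := hq1
        have hq2 : (q : ℕ) - 1 < k - 1 := by omega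
        rw [hhi' q hq2 (by omega)] at hqe
        injection hqe with hfj
        have hb := hfm a ((q : ℕ) - 1) ha1 hq2 (by omega)
        rw [← hfj]
        exact Fin.le_def.mpr (show (f ⟨a, ha1⟩ : ℕ) + 1 ≤ (f ⟨(q:ℕ) - 1, hq2⟩ : ℕ) by omega)
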